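/- Let (X,α,G) be a minimal topological dynamical system on a compact metric space, and let (K_n) be an increasing sequence of compact subsets of G with ⋃_n K_n = G. Then the functions κ_{K_n}(x) := sup_{y ∈ X} d(y, K_n·x) converge uniformly on X to zero. -/

import Mathlib

open Metric Set Filter

theorem denseness_tendsto_uniformly_zero
    {G X : Type*} [Group G] [TopologicalSpace G] [IsTopologicalGroup G]
    [LocallyCompactSpace G] [SigmaCompactSpace G]
    [MetricSpace X] [CompactSpace X] [MulAction G X] [ContinuousSMul G X]
    (hmin : ∀ x : X, Dense (MulAction.orbit G x))
    (K : ℕ → Set G) (hKcompact : ∀ n, IsCompact (K n)) (hKmono : Monotone K)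
    (hKunion : (⋃ n, K n) = Set.univ) :
    TendstoUniformly
      (fun (n : ℕ) (x : X) => ⨆ y : X, Metric.infDist y ((fun k : G => k • x) '' (K n)))
      (fun _ => 0) Filter.atTop := by
  rw [Metric.tendstoUniformly_iff]
  intro ε hε
  by_cases hX : Nonempty X
  swap
  · exact Filter.Eventually.of_forall fun n x => (hX ⟨x⟩).elim
  have hε4 : 0 < ε / 4 := by linarith
  -- key claim: local uniform bound around each point
  have claim : ∀ x : X, ∃ N : ℕ, ∃ U : Set X, U ∈ nhds x ∧ (K N).Nonempty ∧
      ∀ x' ∈ U, ∀ y : X, Metric.infDist y ((fun k : G => k • x') '' (K N)) ≤ 3 * ε / 4 := by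
    intro x
    -- for every y, choose a group element moving x close to y
    have hchoice : ∀ y : X, ∃ g : G, ∃ n : ℕ, g ∈ K n ∧ dist y (g • x) < ε / 4 := by
      intro y
      have hy : y ∈ closure (MulAction.orbit G x) := by
        rw [(hmin x).closure_eq]; trivial
      obtain ⟨b, hb, hbd⟩ := Metric.mem_closure_iff.mp hy (ε / 4) hε4
      obtain ⟨g, rfl⟩ := hb
      have : (g : G) ∈ ⋃ n, K n := by rw [hKunion]; trivial
      obtain ⟨n, hn⟩ := Set.mem_iUnion.mp this
      exact ⟨g, n, hn, hbd⟩
    choose g nn hgK hgd using hchoice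
    -- finite ε/4-net
    obtain ⟨t, -, htfin, htcover⟩ :=
      (isCompact_univ : IsCompact (Set.univ : Set X)).finite_cover_balls hε4
    have htne : t.Nonempty := by
      obtain ⟨x₀⟩ := hX
      obtain ⟨y₀, hy₀⟩ := Set.mem_iUnion₂.mp (htcover (Set.mem_univ x₀))
      exact ⟨y₀, hy₀.1⟩
    set s : Finset X := htfin.toFinset with hs
    have hts : ∀ y, y ∈ s ↔ y ∈ t := fun y => htfin.mem_toFinset
    set N : ℕ := s.sup nn with hN
    have hKsub : ∀ y ∈ s, g y ∈ K N := fun y hy =>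
      hKmono (Finset.le_sup hy) (hgK y)
    obtain ⟨y₀, hy₀t⟩ := htne
    have hy₀s : y₀ ∈ s := (hts y₀).mpr hy₀t
    refine ⟨N, ⋂ y ∈ s, {x' : X | dist (g y • x') (g y • x) < ε / 4}, ?_, ⟨g y₀, hKsub y₀ hy₀s⟩, ?_⟩
    · refine (Filter.biInter_finset_mem s).mpr fun y hy => ?_
      have hcont : Continuous fun x' : X => g y • x' := continuous_const_smul _
      have : IsOpen {x' : X | dist (g y • x') (g y • x) < ε / 4} :=
        isOpen_lt (by continuity) continuous_const
      exact this.mem_nhds (by simp [hε4])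
    · intro x' hx' y
      obtain ⟨z, hz⟩ := Set.mem_iUnion₂.mp (htcover (Set.mem_univ y))
      have hzs : z ∈ s := (hts z).mpr hz.1
      have hyz : dist y z < ε / 4 := mem_ball.mp hz.2
      have hzx : dist z (g z • x) < ε / 4 := hgd z
      have hxx' : dist (g z • x') (g z • x) < ε / 4 := by
        have := Set.mem_iInter₂.mp hx' z hzs
        exact this
      have hmem : g z • x' ∈ (fun k : G => k • x') '' (K N) :=
        ⟨g z, hKsub z hzs, rfl⟩
      calc Metric.infDist y ((fun k : G => k • x') '' (K N))
          ≤ dist y (g z • x') := Metric.infDist_le_dist_of_mem hmem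
        _ ≤ dist y z + dist z (g z • x) + dist (g z • x) (g z • x') := by
            have := dist_triangle y z (g z • x')
            have := dist_triangle z (g z • x) (g z • x')
            linarith [dist_triangle y z (g z • x'), dist_triangle z (g z • x) (g z • x')]
        _ ≤ 3 * ε / 4 := by
            rw [dist_comm (g z • x) (g z • x')] at *
            linarith
  choose N U hUnhds hKne hUbound using claim
  obtain ⟨T, hTcover⟩ := CompactSpace.elim_nhds_subcover U hUnhds
  set N₀ : ℕ := T.sup N with hN₀
  filter_upwards [Filter.eventually_ge_atTop N₀] with n hn x'
  -- x' lies in some U x with x ∈ T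
  have : x' ∈ ⋃ x ∈ T, U x := by rw [hTcover]; trivial
  obtain ⟨x, hxT, hx'U⟩ := Set.mem_iUnion₂.mp this
  have hsub : (fun k : G => k • x') '' (K (N x)) ⊆ (fun k : G => k • x') '' (K n) :=
    Set.image_mono (hKmono (le_trans (Finset.le_sup hxT) hn))
  have hne : ((fun k : G => k • x') '' (K (N x))).Nonempty := (hKne x).image _
  have hboundall : ∀ y : X, Metric.infDist y ((fun k : G => k • x') '' (K n)) ≤ 3 * ε / 4 := by
    intro y
    calc Metric.infDist y ((fun k : G => k • x') '' (K n))
        ≤ Metric.infDist y ((fun k : G => k • x') '' (K (N x))) :=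
          Metric.infDist_le_infDist_of_subset hsub hne
      _ ≤ 3 * ε / 4 := hUbound x x' hx'U y
  have hsup_le : (⨆ y : X, Metric.infDist y ((fun k : G => k • x') '' (K n))) ≤ 3 * ε / 4 :=
    ciSup_le hboundall
  have hsup_nonneg : 0 ≤ ⨆ y : X, Metric.infDist y ((fun k : G => k • x') '' (K n)) :=
    Real.iSup_nonneg fun y => Metric.infDist_nonneg
  rw [Real.dist_eq]
  rw [abs_sub_comm, abs_of_nonneg (by linarith)]
  linarith
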